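/- arXiv:1609.04113 — 2 statements merged into one kernel-verified Lean document; each statement's English description precedes it below -/
import Mathlib

section
/- A right R-module M is Rickart (i.e., for every endomorphism φ of M, the kernel of φ is a direct summand of M) if and only if for any two direct summands A and B of M and any R-linear map f : A → B, the kernel of f is a direct summand of A. -/
/-- `N` is a direct summand of `M`. -/
def IsDirectSummand {R M : Type*} [Ring R] [AddCommGroup M] [Module R M]
    (N : Submodule R M) : Prop := ∃ N' : Submodule R M, IsCompl N N'

/-- `M` is a Rickart module: the kernel of every endomorphism is a direct summand. -/
def IsRickartModule (R M : Type*) [Ring R] [AddCommGroup M] [Module R M] : Prop :=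
  ∀ φ : Module.End R M, IsDirectSummand (LinearMap.ker φ)

/-- If `N ≤ A` and `N` is a direct summand of `M`, then `N` (viewed inside `A`)
is a direct summand of `A`. -/
lemma comap_subtype_summand {R M : Type*} [Ring R] [AddCommGroup M] [Module R M]
    {A N : Submodule R M} (hNA : N ≤ A) (hN : IsDirectSummand N) :
    IsDirectSummand (N.comap A.subtype) := by
  obtain ⟨N', hN'⟩ := hN
  refine ⟨(N' ⊓ A).comap A.subtype, ?_, ?_⟩
  · rw [disjoint_iff_inf_le]
    rintro ⟨x, hxA⟩ ⟨hx1, hx2, -⟩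
    have : x = 0 := (Submodule.disjoint_def.mp hN'.disjoint) x hx1 hx2
    simpa [Submodule.mk_eq_zero] using this
  · rw [codisjoint_iff_le_sup]
    rintro ⟨a, haA⟩ -
    have ha : a ∈ N ⊔ N' := by rw [hN'.sup_eq_top]; trivial
    obtain ⟨n, hn, n', hn', hsum⟩ := Submodule.mem_sup.mp ha
    have hnA : n ∈ A := hNA hn
    have hn'A : n' ∈ A := by
      have : n' = a - n := by rw [← hsum]; abel
      rw [this]; exact A.sub_mem haA hnA
    refine Submodule.mem_sup.mpr ⟨⟨n, hnA⟩, hn, ⟨n', hn'A⟩, ⟨hn', hn'A⟩, ?_⟩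
    exact Subtype.ext hsum

theorem rickart_iff_ker_summand_between_summands
    {R M : Type*} [Ring R] [AddCommGroup M] [Module R M] :
    IsRickartModule R M ↔
      ∀ (A B : Submodule R M), IsDirectSummand A → IsDirectSummand B →
        ∀ f : A →ₗ[R] B, IsDirectSummand (LinearMap.ker f) := by
  constructor
  · rintro hM A B ⟨A', hA⟩ _hB f
    set π := A.linearProjOfIsCompl A' hA with hπ
    set φ : Module.End R M := B.subtype ∘ₗ f ∘ₗ π with hφ
    obtain ⟨K', hK⟩ := hM φ
    set K := LinearMap.ker φ with hKdef
    have hA'K : A' ≤ K := by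
      intro x hx
      show φ x = 0
      have : π x = 0 := Submodule.linearProjOfIsCompl_apply_right hA ⟨x, hx⟩
      simp [hφ, this]
    have hφA : ∀ x : A, φ (x : M) = (f x : M) := by
      intro x
      have : π (x : M) = x := Submodule.linearProjOfIsCompl_apply_left hA x
      simp [hφ, this]
    have hkerf : LinearMap.ker f = ((K ⊓ A).comap A.subtype) := by
      ext x
      simp only [LinearMap.mem_ker, Submodule.mem_comap, Submodule.mem_inf]
      constructor
      · intro h
        refine ⟨?_, x.2⟩
        show φ (x : M) = 0
        rw [hφA x, h]; simp
      · rintro ⟨h, -⟩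
        have hx : φ (x : M) = 0 := h
        rw [hφA x] at hx
        exact_mod_cast hx
    rw [hkerf]
    refine comap_subtype_summand inf_le_right ⟨A' ⊔ K', ?_, ?_⟩
    · rw [disjoint_iff_inf_le]
      rintro x ⟨⟨hxK, hxA⟩, hx2⟩
      obtain ⟨a', ha', k', hk', hsum⟩ := Submodule.mem_sup.mp hx2
      have hk'K : k' ∈ K := by
        have : k' = x - a' := by rw [← hsum]; abel
        rw [this]; exact K.sub_mem hxK (hA'K ha')
      have hk0 : k' = 0 := (Submodule.disjoint_def.mp hK.disjoint) k' hk'K hk'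
      have hxa : x = a' := by rw [← hsum, hk0, add_zero]
      have : x = 0 := (Submodule.disjoint_def.mp hA.disjoint.symm) x (hxa ▸ ha') hxA
      simpa using this
    · rw [codisjoint_iff_le_sup]
      rintro x -
      have hx : x ∈ K ⊔ K' := by rw [hK.sup_eq_top]; trivial
      obtain ⟨k, hk, k', hk', hsum⟩ := Submodule.mem_sup.mp hx
      have hkk : k ∈ A ⊔ A' := by rw [hA.sup_eq_top]; trivial
      obtain ⟨a, ha, a', ha', hsum2⟩ := Submodule.mem_sup.mp hkk
      have haK : a ∈ K := by
        have : a = k - a' := by rw [← hsum2]; abel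
        rw [this]; exact K.sub_mem hk (hA'K ha')
      have : x = a + (a' + k') := by rw [← hsum, ← hsum2]; abel
      rw [this]
      exact Submodule.add_mem_sup ⟨haK, ha⟩ (Submodule.add_mem_sup ha' hk' :
        a' + k' ∈ A' ⊔ K')
  · intro h φ
    set f : (⊤ : Submodule R M) →ₗ[R] (⊤ : Submodule R M) :=
      LinearMap.codRestrict ⊤ (φ ∘ₗ (⊤ : Submodule R M).subtype)
        (fun _ => Submodule.mem_top) with hf
    obtain ⟨C, hC⟩ := h ⊤ ⊤ ⟨⊥, isCompl_top_bot⟩ ⟨⊥, isCompl_top_bot⟩ f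
    have hkerf : ∀ x : (⊤ : Submodule R M), x ∈ LinearMap.ker f ↔ φ (x : M) = 0 := by
      intro x
      simp [hf, LinearMap.mem_ker, LinearMap.codRestrict, Subtype.ext_iff]
    refine ⟨C.map (⊤ : Submodule R M).subtype, ?_, ?_⟩
    · rw [disjoint_iff_inf_le]
      rintro x ⟨hx1, hx2⟩
      obtain ⟨y, hy, hyx⟩ := Submodule.mem_map.mp hx2
      have hyk : y ∈ LinearMap.ker f := (hkerf y).mpr (by show φ ((⊤ : Submodule R M).subtype y) = 0; rw [hyx]; exact hx1)
      have : y = 0 := (Submodule.disjoint_def.mp hC.disjoint) y hyk hy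
      rw [← hyx, this]; simp
    · rw [codisjoint_iff_le_sup]
      rintro x -
      have hx : (⟨x, Submodule.mem_top⟩ : (⊤ : Submodule R M)) ∈ LinearMap.ker f ⊔ C := by
        rw [hC.sup_eq_top]; trivial
      obtain ⟨u, hu, v, hv, hsum⟩ := Submodule.mem_sup.mp hx
      have hx' : x = (u : M) + (v : M) := by
        have := congrArg (Subtype.val) hsum
        simpa using this.symm
      rw [hx']
      exact Submodule.add_mem_sup ((hkerf u).mp hu)
        (Submodule.mem_map.mpr ⟨v, hv, rfl⟩)
end

section
/- A ring R is right nonsingular if and only if for every subset X of R, the right annihilator r_R(X) is a closed right ideal of R (i.e., r_R(X) has no proper essential extension within R_R). -/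
/-- The right annihilator of a set `X ⊆ R`, as a right ideal (a submodule of `R`
over the opposite ring `Rᵐᵒᵖ`). -/
def rightAnnSet (R : Type*) [Ring R] (X : Set R) : Submodule Rᵐᵒᵖ R where
  carrier := {a : R | ∀ x ∈ X, x * a = 0}
  add_mem' := by
    intro a b ha hb x hx
    rw [mul_add, ha x hx, hb x hx, add_zero]
  zero_mem' := by simp
  smul_mem' := by
    intro c a ha x hx
    rw [MulOpposite.smul_eq_mul_unop, ← mul_assoc, ha x hx, zero_mul]

/-- `I` is an essential submodule of `J` (for right ideals of `R`). -/
def IsEssentialIn {R : Type*} [Ring R] (I J : Submodule Rᵐᵒᵖ R) : Prop :=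
  I ≤ J ∧ ∀ K : Submodule Rᵐᵒᵖ R, K ≤ J → K ≠ ⊥ → I ⊓ K ≠ ⊥

/-- A right ideal is closed in `R` if it has no proper essential extension. -/
def IsClosedRightIdeal {R : Type*} [Ring R] (I : Submodule Rᵐᵒᵖ R) : Prop :=
  ∀ J : Submodule Rᵐᵒᵖ R, IsEssentialIn I J → I = J

/-- Left multiplication by `b` as an `Rᵐᵒᵖ`-linear map (i.e. a right-module map). -/
def leftMulLin {R : Type*} [Ring R] (b : R) : R →ₗ[Rᵐᵒᵖ] R where
  toFun r := b * r
  map_add' r s := mul_add b r s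
  map_smul' c r := by
    simp only [MulOpposite.smul_eq_mul_unop, RingHom.id_apply, mul_assoc]

theorem rightNonsingular_iff_rightAnn_closed {R : Type*} [Ring R] :
    (∀ a : R, IsEssentialIn (rightAnnSet R {a}) ⊤ → a = 0) ↔
      ∀ X : Set R, IsClosedRightIdeal (rightAnnSet R X) := by
  constructor
  · -- nonsingular → annihilators closed
    intro h X J ⟨hIJ, hess⟩
    refine le_antisymm hIJ ?_
    intro b hb
    intro x hx
    apply h (x * b)
    refine ⟨le_top, ?_⟩
    intro K _ hK0
    rw [Submodule.ne_bot_iff] at hK0 ⊢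
    obtain ⟨k, hkK, hk0⟩ := hK0
    by_cases hbk : b * k = 0
    · refine ⟨k, Submodule.mem_inf.mpr ⟨?_, hkK⟩, hk0⟩
      intro y hy
      rw [Set.mem_singleton_iff] at hy
      subst hy
      rw [mul_assoc, hbk, mul_zero]
    · -- M = b * (k Rᵐᵒᵖ-span)
      set M : Submodule Rᵐᵒᵖ R := (Submodule.span Rᵐᵒᵖ {k}).map (leftMulLin b) with hM
      have hMJ : M ≤ J := by
        rintro y ⟨z, _, rfl⟩
        have : (MulOpposite.op z) • b ∈ J := J.smul_mem _ hb
        simpa [leftMulLin, MulOpposite.smul_eq_mul_unop] using this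
      have hM0 : M ≠ ⊥ := by
        rw [Submodule.ne_bot_iff]
        exact ⟨b * k, ⟨k, Submodule.mem_span_singleton_self k, rfl⟩, hbk⟩
      have := hess M hMJ hM0
      rw [Submodule.ne_bot_iff] at this
      obtain ⟨y, hy, hy0⟩ := this
      rw [Submodule.mem_inf] at hy
      obtain ⟨hyI, z, hz, rfl⟩ := hy
      simp only [leftMulLin, LinearMap.coe_mk, AddHom.coe_mk] at hy0 ⊢
      refine ⟨z, Submodule.mem_inf.mpr ⟨?_, ?_⟩, ?_⟩
      · intro w hw
        rw [Set.mem_singleton_iff] at hw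
        subst hw
        rw [mul_assoc]
        exact hyI x hx
      · obtain ⟨c, rfl⟩ := Submodule.mem_span_singleton.mp hz
        exact K.smul_mem c hkK
      · intro hz0
        apply hy0
        rw [hz0, mul_zero]
  · -- annihilators closed → nonsingular
    intro h a hess
    have := h {a} ⊤ hess
    have h1 : (1 : R) ∈ rightAnnSet R {a} := this ▸ Submodule.mem_top
    simpa using h1 a rfl
end
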